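/- The rewrite relation generated by a quasi patch graph rewrite system is closed under isomorphism: if G →_R H, G ≈ G', and the renamings witnessing the isomorphisms can be applied, then there exists H' ≈ H with G' →_R H'. -/

import Mathlib

namespace PGR

structure Graph (V E L : Type) where
  Vs : Set V
  Es : Set E
  finV : Vs.Finite
  finE : Es.Finite
  src : E → V
  tgt : E → V
  lab : E → L

variable {V E L : Type}

/-- Well-formedness: every edge's endpoints lie in the vertex set. -/
def Graph.WF (G : Graph V E L) : Prop :=
  ∀ e ∈ G.Es, G.src e ∈ G.Vs ∧ G.tgt e ∈ G.Vs

/-- A graph is simple if edges are determined by source, target and label. -/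
def Graph.Simple (G : Graph V E L) : Prop :=
  ∀ e ∈ G.Es, ∀ e' ∈ G.Es,
    G.src e = G.src e' → G.tgt e = G.tgt e' → G.lab e = G.lab e' → e = e'

/-- Disjointness of graphs (vertex and edge sets). -/
def Disj {L₁ L₂ : Type} (G : Graph V E L₁) (H : Graph V E L₂) : Prop :=
  G.Vs ∩ H.Vs = ∅ ∧ G.Es ∩ H.Es = ∅

/-- J is a patch for context graph C and match graph M. -/
def IsPatch {L₁ L₂ L₃ : Type} (C : Graph V E L₁) (M : Graph V E L₂)
    (J : Graph V E L₃) : Prop :=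
  J.Es ∩ (C.Es ∪ M.Es) = ∅ ∧
  J.Vs = J.src '' J.Es ∪ J.tgt '' J.Es ∧
  ∀ e ∈ J.Es,
    (J.src e ∈ C.Vs ∧ J.tgt e ∈ M.Vs) ∨
    (J.src e ∈ M.Vs ∧ J.tgt e ∈ C.Vs) ∨
    (J.src e ∈ M.Vs ∧ J.tgt e ∈ M.Vs)

/-- The trivial one-node graph on the context node □ (here `sq`). -/
def trivialGraph (E : Type) (sq : V) : Graph V E Unit where
  Vs := {sq}
  Es := ∅
  finV := Set.finite_singleton _
  finE := Set.finite_empty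
  src := fun _ => sq
  tgt := fun _ => sq
  lab := fun _ => ()

/-- T is a patch type for M with context node `sq` (= □). -/
def IsPatchType {L₂ : Type} (sq : V) (M : Graph V E L₂) (T : Graph V E Unit) : Prop :=
  sq ∉ M.Vs ∧ IsPatch (trivialGraph E sq) M T

open Classical in
/-- Graph union (intended for graphs with disjoint edge sets). -/
noncomputable def Graph.union (G H : Graph V E L) : Graph V E L where
  Vs := G.Vs ∪ H.Vs
  Es := G.Es ∪ H.Es
  finV := G.finV.union H.finV
  finE := G.finE.union H.finE
  src := fun e => if e ∈ G.Es then G.src e else H.src e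
  tgt := fun e => if e ∈ G.Es then G.tgt e else H.tgt e
  lab := fun e => if e ∈ G.Es then G.lab e else H.lab e

/-- Patch composition C ·_J M = C ∪ J ∪ M. -/
noncomputable def comp (C J M : Graph V E L) : Graph V E L :=
  (C.union J).union M

/-- Equality of graphs (functions compared on the edge set only). -/
def Graph.Eq (G H : Graph V E L) : Prop :=
  G.Vs = H.Vs ∧ G.Es = H.Es ∧
  ∀ e ∈ G.Es, G.src e = H.src e ∧ G.tgt e = H.tgt e ∧ G.lab e = H.lab e

/-- A graph renaming: bijections on vertices and edges. -/
structure Renaming (V E : Type) where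
  rV : V ≃ V
  rE : E ≃ E

/-- The φ-renaming of a graph. -/
def Renaming.apply (φ : Renaming V E) (G : Graph V E L) : Graph V E L where
  Vs := φ.rV '' G.Vs
  Es := φ.rE '' G.Es
  finV := G.finV.image _
  finE := G.finE.image _
  src := fun e => φ.rV (G.src (φ.rE.symm e))
  tgt := fun e => φ.rV (G.tgt (φ.rE.symm e))
  lab := fun e => G.lab (φ.rE.symm e)

/-- Graph isomorphism: existence of a renaming φ with φ(G) = H. -/
def Iso (G H : Graph V E L) : Prop :=
  ∃ φ : Renaming V E, (φ.apply G).Eq H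

/-- Patch edge j adheres to patch type edge t. -/
def AdheresEdge {L₁ L₂ L₃ : Type} (sq : V) (C : Graph V E L₁) (M : Graph V E L₂)
    (J : Graph V E L₃) (T : Graph V E Unit) (j t : E) : Prop :=
  (J.src j ∈ C.Vs → T.src t = sq) ∧
  (J.src j ∈ M.Vs → T.src t = J.src j) ∧
  (J.tgt j ∈ C.Vs → T.tgt t = sq) ∧
  (J.tgt j ∈ M.Vs → T.tgt t = J.tgt j)

/-- h is an adherence map from patch J to patch type T. -/
def AdherenceMap {L₁ L₂ L₃ : Type} (sq : V) (C : Graph V E L₁) (M : Graph V E L₂)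
    (J : Graph V E L₃) (T : Graph V E Unit) (h : E → E) : Prop :=
  ∀ j ∈ J.Es, h j ∈ T.Es ∧ AdheresEdge sq C M J T j (h j)

open Classical in
/-- cxt_h(e): the context node involved in patch edge e, if any. -/
noncomputable def cxt {L₃ : Type} (sq : V) (J : Graph V E L₃) (T : Graph V E Unit)
    (h : E → E) (e : E) : Set V :=
  if T.src (h e) = sq then {J.src e}
  else if T.tgt (h e) = sq then {J.tgt e}
  else ∅

/-- A (quasi) patch graph rewrite rule: two schemes and a trace function. -/
structure Rule (V E L : Type) where
  PL : Graph V E L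
  TL : Graph V E Unit
  PR : Graph V E L
  TR : Graph V E Unit
  tr : E → E

/-- Well-formedness of a quasi rule, including the trace condition. -/
def Rule.WF (sq : V) (r : Rule V E L) : Prop :=
  IsPatchType sq r.PL r.TL ∧ IsPatchType sq r.PR r.TR ∧
  ∀ e ∈ r.TR.Es, r.tr e ∈ r.TL.Es ∧
    ((r.TR.src e = sq ∨ r.TR.tgt e = sq) →
      (r.TL.src (r.tr e) = sq ∨ r.TL.tgt (r.tr e) = sq))

/-- Rule isomorphism: a renaming fixing □ relating the schemes and commuting with the traces. -/
def Rule.Iso (sq : V) (r r' : Rule V E L) : Prop :=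
  ∃ φ : Renaming V E, φ.rV sq = sq ∧
    (φ.apply r.PL).Eq r'.PL ∧ (φ.apply r.TL).Eq r'.TL ∧
    (φ.apply r.PR).Eq r'.PR ∧ (φ.apply r.TR).Eq r'.TR ∧
    ∀ e ∈ r.TR.Es, φ.rE (r.tr e) = r'.tr (φ.rE e)

/-- Preimage of t under h inside the edge set S. -/
def preim (S : Set E) (h : E → E) (t : E) : Set E := {e | e ∈ S ∧ h e = t}

/-- Condition (iv) of the rewrite relation: fiberwise bijections preserving labels
and with cxt containment. -/
def BijCond (sq : V) (r : Rule V E L) (J J' : Graph V E L) (hL hR : E → E) : Prop :=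
  ∀ t ∈ r.TR.Es, ∃ σ : E → E,
    Set.BijOn σ (preim J'.Es hR t) (preim J.Es hL (r.tr t)) ∧
    ∀ e ∈ preim J'.Es hR t,
      J'.lab e = J.lab (σ e) ∧ cxt sq J' r.TR hR e ⊆ cxt sq J r.TL hL (σ e)

/-- A rewrite step via a fixed rule r, with context C, left patch J and right patch J'. -/
def StepVia (sq : V) (r : Rule V E L) (C J J' : Graph V E L) : Prop :=
  ∃ hL hR : E → E,
    Disj C r.PL ∧ IsPatch C r.PL J ∧
    Disj C r.PR ∧ IsPatch C r.PR J' ∧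
    AdherenceMap sq C r.PL J r.TL hL ∧
    AdherenceMap sq C r.PR J' r.TR hR ∧
    BijCond sq r J J' hL hR

/-- The rewrite relation induced by a (quasi) patch graph rewrite system R. -/
def Step (sq : V) (R : Set (Rule V E L)) (G H : Graph V E L) : Prop :=
  ∃ r₀ ∈ R, ∃ r : Rule V E L, Rule.Iso sq r₀ r ∧
    ∃ C J J' : Graph V E L, StepVia sq r C J J' ∧
      G.Eq (comp C J r.PL) ∧ H.Eq (comp C J' r.PR)

/-- Subgraph relation. -/
def Subgraph (M G : Graph V E L) : Prop :=
  M.Vs ⊆ G.Vs ∧ M.Es ⊆ G.Es ∧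
  ∀ e ∈ M.Es, M.src e = G.src e ∧ M.tgt e = G.tgt e ∧ M.lab e = G.lab e

section Aux

lemma graphEq_refl (G : Graph V E L) : G.Eq G := ⟨rfl, rfl, fun _ _ => ⟨rfl, rfl, rfl⟩⟩

lemma graphEq_symm {G H : Graph V E L} (h : G.Eq H) : H.Eq G := by
  obtain ⟨h1, h2, h3⟩ := h
  refine ⟨h1.symm, h2.symm, fun e he => ?_⟩
  obtain ⟨a, b, c⟩ := h3 e (h2 ▸ he)
  exact ⟨a.symm, b.symm, c.symm⟩

lemma graphEq_trans {G H K : Graph V E L} (h : G.Eq H) (h' : H.Eq K) : G.Eq K := by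
  obtain ⟨h1, h2, h3⟩ := h; obtain ⟨k1, k2, k3⟩ := h'
  refine ⟨h1.trans k1, h2.trans k2, fun e he => ?_⟩
  obtain ⟨a, b, c⟩ := h3 e he
  obtain ⟨a', b', c'⟩ := k3 e (h2 ▸ he)
  exact ⟨a.trans a', b.trans b', c.trans c'⟩

lemma apply_congr (φ : Renaming V E) {G H : Graph V E L} (h : G.Eq H) :
    (φ.apply G).Eq (φ.apply H) := by
  obtain ⟨h1, h2, h3⟩ := h
  refine ⟨by simp [Renaming.apply, h1], by simp [Renaming.apply, h2], fun e he => ?_⟩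
  have he' : φ.rE.symm e ∈ G.Es := Set.mem_image_equiv.mp he
  obtain ⟨a, b, c⟩ := h3 _ he'
  exact ⟨congrArg _ a, congrArg _ b, c⟩

lemma graph_ext {G H : Graph V E L} (hV : G.Vs = H.Vs) (hE : G.Es = H.Es)
    (hs : G.src = H.src) (ht : G.tgt = H.tgt) (hl : G.lab = H.lab) : G = H := by
  cases G; cases H
  simp only at hV hE hs ht hl
  subst hV; subst hE; subst hs; subst ht; subst hl
  rfl

lemma apply_union (φ : Renaming V E) (G H : Graph V E L) :
    φ.apply (G.union H) = (φ.apply G).union (φ.apply H) := by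
  refine graph_ext ?_ ?_ ?_ ?_ ?_
  · simp [Renaming.apply, Graph.union, Set.image_union]
  · simp [Renaming.apply, Graph.union, Set.image_union]
  all_goals
    funext e
    by_cases hc : φ.rE.symm e ∈ G.Es <;>
      simp [Renaming.apply, Graph.union, hc, Set.mem_image_equiv]

lemma apply_comp (φ : Renaming V E) (C J M : Graph V E L) :
    φ.apply (comp C J M) = comp (φ.apply C) (φ.apply J) (φ.apply M) := by
  rw [comp, comp, apply_union, apply_union]

lemma apply_apply (φ ψ : Renaming V E) (G : Graph V E L) :
    φ.apply (ψ.apply G) = (Renaming.mk (ψ.rV.trans φ.rV) (ψ.rE.trans φ.rE)).apply G := by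
  refine graph_ext ?_ ?_ ?_ ?_ ?_ <;>
    simp [Renaming.apply, Set.image_image]

lemma eq_sq_iff (φ : Renaming V E) {sq : V} (hsq : φ.rV sq = sq) (x : V) :
    φ.rV x = sq ↔ x = sq :=
  ⟨fun h => φ.rV.injective (h.trans hsq.symm), fun h => h ▸ hsq⟩

lemma disj_map {L₁ L₂ : Type} (φ : Renaming V E) {G : Graph V E L₁} {H : Graph V E L₂}
    (h : Disj G H) : Disj (φ.apply G) (φ.apply H) := by
  obtain ⟨h1, h2⟩ := h
  constructor
  · show (φ.rV '' G.Vs) ∩ (φ.rV '' H.Vs) = ∅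
    rw [← Set.image_inter φ.rV.injective, h1, Set.image_empty]
  · show (φ.rE '' G.Es) ∩ (φ.rE '' H.Es) = ∅
    rw [← Set.image_inter φ.rE.injective, h2, Set.image_empty]

lemma isPatch_map {L₁ L₂ L₃ : Type} (φ : Renaming V E) {C : Graph V E L₁}
    {M : Graph V E L₂} {J : Graph V E L₃} (h : IsPatch C M J) :
    IsPatch (φ.apply C) (φ.apply M) (φ.apply J) := by
  obtain ⟨h1, h2, h3⟩ := h
  refine ⟨?_, ?_, ?_⟩
  · show (φ.rE '' J.Es) ∩ (φ.rE '' C.Es ∪ φ.rE '' M.Es) = ∅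
    rw [← Set.image_union, ← Set.image_inter φ.rE.injective, h1, Set.image_empty]
  · show φ.rV '' J.Vs =
      (φ.apply J).src '' (φ.rE '' J.Es) ∪ (φ.apply J).tgt '' (φ.rE '' J.Es)
    have hs : (φ.apply J).src '' (φ.rE '' J.Es) = φ.rV '' (J.src '' J.Es) := by
      rw [Set.image_image, Set.image_image]
      exact Set.image_congr fun e _ => by simp [Renaming.apply]
    have ht : (φ.apply J).tgt '' (φ.rE '' J.Es) = φ.rV '' (J.tgt '' J.Es) := by
      rw [Set.image_image, Set.image_image]
      exact Set.image_congr fun e _ => by simp [Renaming.apply]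
    rw [hs, ht, ← Set.image_union, ← h2]
  · intro e he
    have he' : φ.rE.symm e ∈ J.Es := Set.mem_image_equiv.mp he
    have hsrc : (φ.apply J).src e = φ.rV (J.src (φ.rE.symm e)) := rfl
    have htgt : (φ.apply J).tgt e = φ.rV (J.tgt (φ.rE.symm e)) := rfl
    rcases h3 _ he' with ⟨a, b⟩ | ⟨a, b⟩ | ⟨a, b⟩
    · exact Or.inl ⟨Set.mem_image_of_mem _ a, Set.mem_image_of_mem _ b⟩
    · exact Or.inr (Or.inl ⟨Set.mem_image_of_mem _ a, Set.mem_image_of_mem _ b⟩)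
    · exact Or.inr (Or.inr ⟨Set.mem_image_of_mem _ a, Set.mem_image_of_mem _ b⟩)

lemma adherenceMap_map {L₁ L₂ L₃ : Type} {sq : V} (φ : Renaming V E)
    (hsq : φ.rV sq = sq) {C : Graph V E L₁} {M : Graph V E L₂} {J : Graph V E L₃}
    {T : Graph V E Unit} {h : E → E} (ha : AdherenceMap sq C M J T h) :
    AdherenceMap sq (φ.apply C) (φ.apply M) (φ.apply J) (φ.apply T)
      (fun e => φ.rE (h (φ.rE.symm e))) := by
  intro j hj
  have hj' : φ.rE.symm j ∈ J.Es := Set.mem_image_equiv.mp hj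
  obtain ⟨h1, a1, a2, a3, a4⟩ := ha _ hj'
  have hT : ∀ x, (φ.apply T).src (φ.rE x) = φ.rV (T.src x) := fun x => by
    simp [Renaming.apply]
  have hT' : ∀ x, (φ.apply T).tgt (φ.rE x) = φ.rV (T.tgt x) := fun x => by
    simp [Renaming.apply]
  refine ⟨Set.mem_image_of_mem _ h1, ?_, ?_, ?_, ?_⟩
  · intro hm
    have : J.src (φ.rE.symm j) ∈ C.Vs := by
      have := hm
      rw [show (φ.apply J).src j = φ.rV (J.src (φ.rE.symm j)) from rfl] at this
      exact (φ.rV.injective.mem_set_image).mp this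
    rw [hT, a1 this, hsq]
  · intro hm
    have : J.src (φ.rE.symm j) ∈ M.Vs := by
      have := hm
      rw [show (φ.apply J).src j = φ.rV (J.src (φ.rE.symm j)) from rfl] at this
      exact (φ.rV.injective.mem_set_image).mp this
    rw [hT, a2 this]; rfl
  · intro hm
    have : J.tgt (φ.rE.symm j) ∈ C.Vs := by
      have := hm
      rw [show (φ.apply J).tgt j = φ.rV (J.tgt (φ.rE.symm j)) from rfl] at this
      exact (φ.rV.injective.mem_set_image).mp this
    rw [hT', a3 this, hsq]
  · intro hm
    have : J.tgt (φ.rE.symm j) ∈ M.Vs := by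
      have := hm
      rw [show (φ.apply J).tgt j = φ.rV (J.tgt (φ.rE.symm j)) from rfl] at this
      exact (φ.rV.injective.mem_set_image).mp this
    rw [hT', a4 this]; rfl

lemma cxt_map {L₃ : Type} {sq : V} (φ : Renaming V E) (hsq : φ.rV sq = sq)
    (J : Graph V E L₃) (T : Graph V E Unit) (h : E → E) (e : E) :
    cxt sq (φ.apply J) (φ.apply T) (fun x => φ.rE (h (φ.rE.symm x))) e
      = φ.rV '' cxt sq J T h (φ.rE.symm e) := by
  have h1 : (φ.apply T).src (φ.rE (h (φ.rE.symm e))) = φ.rV (T.src (h (φ.rE.symm e))) := by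
    simp [Renaming.apply]
  have h2 : (φ.apply T).tgt (φ.rE (h (φ.rE.symm e))) = φ.rV (T.tgt (h (φ.rE.symm e))) := by
    simp [Renaming.apply]
  simp only [cxt]
  have hcs : ((φ.apply T).src (φ.rE (h (φ.rE.symm e))) = sq) ↔
      (T.src (h (φ.rE.symm e)) = sq) := by rw [h1]; exact eq_sq_iff φ hsq _
  have hct : ((φ.apply T).tgt (φ.rE (h (φ.rE.symm e))) = sq) ↔
      (T.tgt (h (φ.rE.symm e)) = sq) := by rw [h2]; exact eq_sq_iff φ hsq _
  by_cases hs : T.src (h (φ.rE.symm e)) = sq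
  · rw [if_pos (hcs.mpr hs), if_pos hs, Set.image_singleton]
    rfl
  · rw [if_neg (fun hh => hs (hcs.mp hh)), if_neg hs]
    by_cases htg : T.tgt (h (φ.rE.symm e)) = sq
    · rw [if_pos (hct.mpr htg), if_pos htg, Set.image_singleton]
      rfl
    · rw [if_neg (fun hh => htg (hct.mp hh)), if_neg htg, Set.image_empty]

lemma preim_image (φ : Renaming V E) (S : Set E) (h : E → E) (t : E) :
    preim (φ.rE '' S) (fun e => φ.rE (h (φ.rE.symm e))) (φ.rE t)
      = φ.rE '' preim S h t := by
  ext e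
  simp [preim, Set.mem_image_equiv, Equiv.apply_eq_iff_eq]

lemma bijOn_image_equiv (φ : Renaming V E) {σ : E → E} {A B : Set E}
    (h : Set.BijOn σ A B) :
    Set.BijOn (fun e => φ.rE (σ (φ.rE.symm e))) (φ.rE '' A) (φ.rE '' B) := by
  have h1 : Set.BijOn (⇑φ.rE.symm) (φ.rE '' A) A := by
    have := (φ.rE.symm.injective.injOn).bijOn_image (s := φ.rE '' A)
    rwa [Equiv.symm_image_image] at this
  have h2 : Set.BijOn (⇑φ.rE) B (φ.rE '' B) := (φ.rE.injective.injOn).bijOn_image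
  exact h2.comp (h.comp h1)

/-- The φ-renamed rule. -/
def Rule.map (φ : Renaming V E) (r : Rule V E L) : Rule V E L where
  PL := φ.apply r.PL
  TL := φ.apply r.TL
  PR := φ.apply r.PR
  TR := φ.apply r.TR
  tr := fun e => φ.rE (r.tr (φ.rE.symm e))

end Aux

/-- The rewrite relation is closed under isomorphism: if
G →_R H and G ≈ G' via a renaming that can be applied (it fixes □), then
there is H' ≈ H with G' →_R H'. -/
theorem step_closed_under_iso (sq : V) (R : Set (Rule V E L))
    (hRwf : ∀ r ∈ R, r.WF sq)
    (G H G' : Graph V E L) (φ : Renaming V E) (hφ : φ.rV sq = sq)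
    (hGG' : (φ.apply G).Eq G') (hstep : Step sq R G H) :
    ∃ H' : Graph V E L, Iso H H' ∧ Step sq R G' H' := by
  obtain ⟨r₀, hr₀R, r, hiso, C, J, J', hSV, hG, hH⟩ := hstep
  obtain ⟨hL, hR, hd1, hp1, hd2, hp2, ha1, ha2, hbij⟩ := hSV
  refine ⟨φ.apply H, ⟨φ, graphEq_refl _⟩, r₀, hr₀R, Rule.map φ r, ?_, φ.apply C,
    φ.apply J, φ.apply J', ?_, ?_, ?_⟩
  · -- Rule.Iso sq r₀ (r.map φ)
    obtain ⟨ψ₀, hψsq, hPL, hTL, hPR, hTR, htr⟩ := hiso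
    refine ⟨⟨ψ₀.rV.trans φ.rV, ψ₀.rE.trans φ.rE⟩, by simp [hψsq, hφ], ?_, ?_, ?_, ?_, ?_⟩
    · show ((Renaming.mk (ψ₀.rV.trans φ.rV) (ψ₀.rE.trans φ.rE)).apply r₀.PL).Eq (φ.apply r.PL)
      rw [← apply_apply]; exact apply_congr φ hPL
    · show ((Renaming.mk (ψ₀.rV.trans φ.rV) (ψ₀.rE.trans φ.rE)).apply r₀.TL).Eq (φ.apply r.TL)
      rw [← apply_apply]; exact apply_congr φ hTL
    · show ((Renaming.mk (ψ₀.rV.trans φ.rV) (ψ₀.rE.trans φ.rE)).apply r₀.PR).Eq (φ.apply r.PR)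
      rw [← apply_apply]; exact apply_congr φ hPR
    · show ((Renaming.mk (ψ₀.rV.trans φ.rV) (ψ₀.rE.trans φ.rE)).apply r₀.TR).Eq (φ.apply r.TR)
      rw [← apply_apply]; exact apply_congr φ hTR
    · intro e he
      show φ.rE (ψ₀.rE (r₀.tr e)) = φ.rE (r.tr (φ.rE.symm (φ.rE (ψ₀.rE e))))
      rw [Equiv.symm_apply_apply]
      exact congrArg φ.rE (htr e he)
  · -- StepVia
    refine ⟨fun e => φ.rE (hL (φ.rE.symm e)), fun e => φ.rE (hR (φ.rE.symm e)),
      disj_map φ hd1, isPatch_map φ hp1, disj_map φ hd2, isPatch_map φ hp2,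
      adherenceMap_map φ hφ ha1, adherenceMap_map φ hφ ha2, ?_⟩
    intro t ht
    have ht' : φ.rE.symm t ∈ r.TR.Es := Set.mem_image_equiv.mp ht
    obtain ⟨σ, hbijσ, hlab⟩ := hbij _ ht'
    refine ⟨fun e => φ.rE (σ (φ.rE.symm e)), ?_, ?_⟩
    · have hpre1 : preim (φ.apply J').Es (fun e => φ.rE (hR (φ.rE.symm e))) t
          = φ.rE '' preim J'.Es hR (φ.rE.symm t) := by
        conv_lhs => rw [show t = φ.rE (φ.rE.symm t) from (φ.rE.apply_symm_apply t).symm]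
        exact preim_image φ J'.Es hR (φ.rE.symm t)
      have hpre2 : preim (φ.apply J).Es (fun e => φ.rE (hL (φ.rE.symm e)))
            ((Rule.map φ r).tr t) = φ.rE '' preim J.Es hL (r.tr (φ.rE.symm t)) :=
        preim_image φ J.Es hL (r.tr (φ.rE.symm t))
      rw [hpre1, hpre2]
      exact bijOn_image_equiv φ hbijσ
    · intro e he
      have he' : φ.rE.symm e ∈ preim J'.Es hR (φ.rE.symm t) := by
        obtain ⟨hm, hv⟩ := he
        refine ⟨Set.mem_image_equiv.mp hm, ?_⟩
        have : φ.rE (hR (φ.rE.symm e)) = t := hv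
        rw [← this, Equiv.symm_apply_apply]
      obtain ⟨hlabe, hcxte⟩ := hlab _ he'
      constructor
      · show J'.lab (φ.rE.symm e) = J.lab (φ.rE.symm (φ.rE (σ (φ.rE.symm e))))
        rw [Equiv.symm_apply_apply]; exact hlabe
      · have c1 := cxt_map φ hφ J' r.TR hR e
        have c2 := cxt_map φ hφ J r.TL hL (φ.rE (σ (φ.rE.symm e)))
        rw [Equiv.symm_apply_apply] at c2
        show cxt sq (φ.apply J') (φ.apply r.TR) _ e ⊆
          cxt sq (φ.apply J) (φ.apply r.TL) _ (φ.rE (σ (φ.rE.symm e)))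
        rw [c1, c2]
        exact Set.image_mono hcxte
  · -- G' eq
    refine graphEq_trans (graphEq_symm hGG') ?_
    show (φ.apply G).Eq (comp (φ.apply C) (φ.apply J) (φ.apply r.PL))
    rw [← apply_comp]; exact apply_congr φ hG
  · -- H' eq
    show (φ.apply H).Eq (comp (φ.apply C) (φ.apply J') (φ.apply r.PR))
    rw [← apply_comp]; exact apply_congr φ hH


end PGR
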